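/- Heine's binomial formula: for any n ∈ ℕ and a ∈ ℂ, the q-shifted factorial satisfies (a;q)_n = Σ_{k=0}^n C(n,k)_q q^{k(k-1)/2} (-1)^k a^k, where C(n,k)_q is the q-binomial coefficient. -/
import Mathlib


open Finset

noncomputable def qNum (q : ℂ) (n : ℕ) : ℂ := (1 - q ^ n) / (1 - q)

noncomputable def qFact (q : ℂ) : ℕ → ℂ
  | 0 => 1
  | n + 1 => qFact q n * qNum q (n + 1)

noncomputable def qExp (q z : ℂ) : ℂ := ∑' n : ℕ, z ^ n / qFact q n

noncomputable def qShift (q a : ℂ) (n : ℕ) : ℂ := ∏ j ∈ Finset.range n, (1 - q ^ j * a)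

noncomputable def qBinom (q : ℂ) (n k : ℕ) : ℂ :=
  qShift q q n / (qShift q q (n - k) * qShift q q k)

lemma qShift_succ (q a : ℂ) (m : ℕ) :
    qShift q a (m + 1) = qShift q a m * (1 - q ^ m * a) := Finset.prod_range_succ _ _

lemma qShift_zero (q a : ℂ) : qShift q a 0 = 1 := Finset.prod_range_zero _

lemma one_sub_qpow_ne (q : ℂ) (hq : ‖q‖ < 1) (m : ℕ) : (1 : ℂ) - q ^ (m + 1) ≠ 0 := by
  intro h
  have h1 : q ^ (m + 1) = 1 := by linear_combination -h
  have h2 : ‖q ^ (m + 1)‖ < 1 := by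
    rw [norm_pow]
    exact pow_lt_one₀ (norm_nonneg q) hq (Nat.succ_ne_zero m)
  rw [h1] at h2; simp at h2

lemma qShift_q_ne (q : ℂ) (hq : ‖q‖ < 1) (m : ℕ) : qShift q q m ≠ 0 := by
  unfold qShift
  apply Finset.prod_ne_zero_iff.mpr
  intro j _
  have := one_sub_qpow_ne q hq j
  rwa [pow_succ] at this

lemma qBinom_zero (q : ℂ) (hq : ‖q‖ < 1) (n : ℕ) : qBinom q n 0 = 1 := by
  unfold qBinom
  rw [Nat.sub_zero, qShift_zero, mul_one, div_self (qShift_q_ne q hq n)]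

lemma qBinom_self (q : ℂ) (hq : ‖q‖ < 1) (n : ℕ) : qBinom q n n = 1 := by
  unfold qBinom
  rw [Nat.sub_self, qShift_zero, one_mul, div_self (qShift_q_ne q hq n)]

lemma qPascal (q : ℂ) (hq : ‖q‖ < 1) {n k : ℕ} (hk : k < n) :
    qBinom q (n + 1) (k + 1) = qBinom q n (k + 1) + q ^ (n - k) * qBinom q n k := by
  unfold qBinom
  have e1 : n + 1 - (k + 1) = n - k := by omega
  have e2 : n - (k + 1) = n - k - 1 := by omega
  rw [e1, e2]
  have hpow : q ^ (n - k) * q ^ (k + 1) = q ^ (n + 1) := by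
    rw [← pow_add]
    congr 1
    omega
  have h1 : qShift q q (n + 1) = qShift q q n * (1 - q ^ (n - k) * q ^ (k + 1)) := by
    rw [qShift_succ, ← pow_succ, ← hpow]
  have h2 : qShift q q (n - k) = qShift q q (n - k - 1) * (1 - q ^ (n - k)) := by
    have : n - k = (n - k - 1) + 1 := by omega
    rw [this, qShift_succ, ← pow_succ, ← this]
  have h3 : qShift q q (k + 1) = qShift q q k * (1 - q ^ (k + 1)) := by
    rw [qShift_succ, ← pow_succ]
  have n1 : qShift q q (n - k - 1) ≠ 0 := qShift_q_ne q hq _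
  have n2 : qShift q q k ≠ 0 := qShift_q_ne q hq _
  have n3 : (1 : ℂ) - q ^ (n - k) ≠ 0 := by
    have : n - k = (n - k - 1) + 1 := by omega
    rw [this]; exact one_sub_qpow_ne q hq _
  have n4 : (1 : ℂ) - q ^ (k + 1) ≠ 0 := one_sub_qpow_ne q hq _
  rw [h1, h2, h3]
  field_simp
  ring

/-- Triangle number identity. -/
lemma tri_succ (k : ℕ) : (k + 1) * k / 2 = k * (k - 1) / 2 + k := by
  rcases k with _ | j
  · rfl
  · have h : (j + 1 + 1) * (j + 1) = (j + 1) * j + 2 * (j + 1) := by ring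
    rw [h, Nat.add_mul_div_left _ _ (by norm_num : 0 < 2)]
    simp

noncomputable def dcoef (q : ℂ) (n k : ℕ) : ℂ :=
  if k ≤ n then qBinom q n k * q ^ (k * (k - 1) / 2) * (-1) ^ k else 0

lemma dcoef_rec (q : ℂ) (hq : ‖q‖ < 1) {n k : ℕ} (hk : k ≤ n) :
    dcoef q (n + 1) (k + 1) = dcoef q n (k + 1) - q ^ n * dcoef q n k := by
  have htri : (k + 1) * k / 2 = k * (k - 1) / 2 + k := tri_succ k
  have hksub : (k + 1) - 1 = k := rfl
  rcases eq_or_lt_of_le hk with rfl | hlt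
  · -- k = n
    rw [dcoef, dcoef, dcoef, if_pos (le_refl (k + 1)), if_neg (by omega), if_pos (le_refl k)]
    rw [qBinom_self q hq, qBinom_self q hq, hksub, htri, pow_add]
    ring
  · -- k < n
    rw [dcoef, dcoef, dcoef, if_pos (by omega : k + 1 ≤ n + 1), if_pos (by omega : k + 1 ≤ n),
      if_pos hk, hksub, qPascal q hq hlt, htri, pow_add]
    have hpow2 : q ^ (n - k) * q ^ k = q ^ n := by
      rw [← pow_add]; congr 1; omega
    calc (qBinom q n (k + 1) + q ^ (n - k) * qBinom q n k) *
          (q ^ (k * (k - 1) / 2) * q ^ k) * (-1) ^ (k + 1)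
        = qBinom q n (k + 1) * (q ^ (k * (k - 1) / 2) * q ^ k) * (-1) ^ (k + 1)
          - (q ^ (n - k) * q ^ k) * (qBinom q n k * q ^ (k * (k - 1) / 2) * (-1) ^ k) := by ring
      _ = _ := by rw [hpow2]

/-- Heine's binomial formula. -/
theorem heine_binomial (q a : ℂ) (hq : ‖q‖ < 1) (n : ℕ) :
    qShift q a n =
      ∑ k ∈ Finset.range (n + 1),
        qBinom q n k * q ^ (k * (k - 1) / 2) * (-1) ^ k * a ^ k := by
  have hd : ∀ m, (∑ k ∈ Finset.range (m + 1),
      qBinom q m k * q ^ (k * (k - 1) / 2) * (-1) ^ k * a ^ k)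
      = ∑ k ∈ Finset.range (m + 1), dcoef q m k * a ^ k := by
    intro m
    refine Finset.sum_congr rfl fun k hk => ?_
    rw [dcoef, if_pos (Nat.lt_succ_iff.mp (Finset.mem_range.mp hk))]
  induction n with
  | zero => simp [qShift, qBinom]
  | succ n ih =>
    rw [hd, qShift_succ, ih, hd]
    set X := ∑ k ∈ Finset.range (n + 1), dcoef q n k * a ^ k with hX
    rw [Finset.sum_range_succ' _ (n + 1)]
    have h2 : ∀ i ∈ Finset.range (n + 1), dcoef q (n + 1) (i + 1) * a ^ (i + 1)
        = dcoef q n (i + 1) * a ^ (i + 1) - q ^ n * a * (dcoef q n i * a ^ i) := by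
      intro i hi
      rw [dcoef_rec q hq (Nat.lt_succ_iff.mp (Finset.mem_range.mp hi)), pow_succ]
      ring
    rw [Finset.sum_congr rfl h2, Finset.sum_sub_distrib, ← Finset.mul_sum, ← hX]
    have h3 : (∑ i ∈ Finset.range (n + 1), dcoef q n (i + 1) * a ^ (i + 1)) = X - 1 := by
      have e1 := Finset.sum_range_succ' (fun k => dcoef q n k * a ^ k) (n + 1)
      have e2 := Finset.sum_range_succ (fun k => dcoef q n k * a ^ k) (n + 1)
      have e3 : dcoef q n (n + 1) = 0 := by rw [dcoef, if_neg (by omega)]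
      have e4 : dcoef q n 0 = 1 := by
        rw [dcoef, if_pos (Nat.zero_le n), qBinom_zero q hq]; norm_num
      simp only [e3, e4, pow_zero, mul_one, zero_mul, add_zero] at e1 e2
      rw [← hX] at e2
      rw [e2] at e1
      linear_combination -e1
    rw [h3]
    have e5 : dcoef q (n + 1) 0 = 1 := by
      rw [dcoef, if_pos (Nat.zero_le _), qBinom_zero q hq]; norm_num
    rw [e5]
    ring
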